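/- arXiv:2205.11391 — 3 statements merged into one kernel-verified Lean document; each statement's English description precedes it below -/
import Mathlib

section
/- Let X be a topological space and let F : X × ℝ → [0, ∞] be a jointly lower semicontinuous function such that F(x, 0) = 0 for every x ∈ X, and such that for each x ∈ X the zero set of F(x, ·) is downward closed on [0, ∞): whenever 0 ≤ t ≤ t' and F(x, t') = 0, also F(x, t) = 0. Define s : X → [0, ∞] by s(x) = sup { t ≥ 0 : F(x, t) = 0 }. Then s is upper semicontinuous on X. -/
open scoped ENNReal

/-- Abstract core of Proposition 2.1: the cut-parameter function
`s(x) = sup { t ≥ 0 : F(x, t) = 0 }` is upper semicontinuous whenever `F` is a jointly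
lower semicontinuous `[0,∞]`-valued function with `F(x,0) = 0` whose zero set in the
`t`-variable is downward closed on `[0,∞)`. -/
theorem upperSemicontinuous_sup_zeroSet
    {X : Type*} [TopologicalSpace X] (F : X × ℝ → ℝ≥0∞)
    (hF : LowerSemicontinuous F)
    (hF0 : ∀ x : X, F (x, 0) = 0)
    (hdown : ∀ (x : X) (t t' : ℝ), 0 ≤ t → t ≤ t' → F (x, t') = 0 → F (x, t) = 0)
    (s : X → ℝ≥0∞)
    (hs : ∀ x : X, s x = ⨆ t ∈ {t : ℝ | 0 ≤ t ∧ F (x, t) = 0}, ENNReal.ofReal t) :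
    UpperSemicontinuous s := by
  intro x a ha
  obtain ⟨b, hb1, hb2⟩ := exists_between ha
  have hbtop : b ≠ ⊤ := hb2.ne_top
  set t : ℝ := b.toReal with ht_def
  have hbt : ENNReal.ofReal t = b := ENNReal.ofReal_toReal hbtop
  -- F (x, t) must be positive
  have hFxt : 0 < F (x, t) := by
    rcases eq_or_ne (F (x, t)) 0 with h0 | h0
    · exfalso
      have : ENNReal.ofReal t ≤ s x := by
        rw [hs x]
        exact le_iSup₂ (f := fun t' _ => ENNReal.ofReal t') t ⟨ENNReal.toReal_nonneg, h0⟩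
      rw [hbt] at this
      exact absurd hb1 this.not_gt
    · exact pos_iff_ne_zero.mpr h0
  -- by lower semicontinuity, F (·, t) > 0 near x
  have hev : ∀ᶠ z in nhds (x, t), 0 < F z := hF (x, t) 0 hFxt
  have hc : Continuous fun y : X => (y, t) := continuous_id.prodMk continuous_const
  filter_upwards [(hc.tendsto x).eventually hev] with y hy
  have hsy : s y ≤ ENNReal.ofReal t := by
    rw [hs y]
    refine iSup₂_le fun t' ht' => ENNReal.ofReal_le_ofReal ?_
    by_contra hlt
    push_neg at hlt
    exact hy.ne' (hdown y t t' ENNReal.toReal_nonneg hlt.le ht'.2)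
  calc s y ≤ ENNReal.ofReal t := hsy
    _ = b := hbt
    _ < a := hb2
end

section
/- Let E be a connected, locally path-connected topological space, let S ⊆ E be a path-connected, locally path-connected subspace with inclusion map i : S → E, and let x ∈ S. Let p : Ẽ → E be a covering map with Ẽ path-connected, and let x̂ ∈ p⁻¹(x) be such that p_*(π₁(Ẽ, x̂)) = i_*(π₁(S, x)) as subgroups of π₁(E, x). If p⁻¹(S) is path-connected, then i_* : π₁(S, x) → π₁(E, x) is surjective. -/
open CategoryTheory

universe u

/-- The homomorphism on fundamental groups induced by a continuous map. -/
noncomputable def piMap {X Y : Type u} [TopologicalSpace X] [TopologicalSpace Y]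
    (f : C(X, Y)) (x : X) :
    Aut (FundamentalGroupoid.mk x) →* Aut (FundamentalGroupoid.mk (f x)) :=
  CategoryTheory.Functor.mapAut (X := FundamentalGroupoid.mk x)
    (FundamentalGroupoid.fundamentalGroupoidFunctor.map (X := TopCat.of X) (Y := TopCat.of Y) (TopCat.ofHom f))

section Aux

open unitInterval

attribute [local instance] Path.Homotopic.setoid

noncomputable instance : ContractibleSpace I :=
  (convex_Icc (0:ℝ) 1).contractibleSpace ⟨0, by constructor <;> norm_num⟩

/-- Affine path in the unit interval from `a` to `b`. -/
def affI (a b : I) : I → I := fun t =>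
  ⟨(1 - (t:ℝ)) * a + (t:ℝ) * b, by
    have h := (convex_Icc (0:ℝ) 1) a.2 b.2 (sub_nonneg.2 t.2.2) t.2.1 (by ring)
    simpa [smul_eq_mul] using h⟩

lemma continuous_affI (a b : I) : Continuous (affI a b) :=
  Continuous.subtype_mk
    (((continuous_const.sub continuous_subtype_val).mul continuous_const).add
      (continuous_subtype_val.mul continuous_const)) _

lemma affI_zero (a b : I) : affI a b 0 = a := Subtype.ext (by simp [affI])

lemma affI_one (a b : I) : affI a b 1 = b := Subtype.ext (by simp [affI])

lemma affI_self (a : I) (t : I) : affI a a t = a := Subtype.ext (by simp [affI]; ring)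

lemma affI_zero_one (t : I) : affI 0 1 t = t := Subtype.ext (by simp [affI])

variable {E E' : Type u} [TopologicalSpace E] [TopologicalSpace E']

/-- The restriction of `γ` to the (affine) segment from `a` to `b`. -/
def subpath (γ : C(I, E)) (a b : I) : Path (γ a) (γ b) where
  toFun := fun t => γ (affI a b t)
  continuous_toFun := γ.continuous.comp (continuous_affI a b)
  source' := by show γ (affI a b 0) = γ a; rw [affI_zero]
  target' := by show γ (affI a b 1) = γ b; rw [affI_one]

/-- The affine path in `I` itself. -/
def idSubpath (a b : I) : Path a b := subpath (ContinuousMap.id I) a b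

lemma subpath_eq_map (γ : C(I, E)) (a b : I) :
    (idSubpath a b).map γ.continuous = subpath γ a b := by
  ext t; rfl

lemma subpath_trans_homotopic (γ : C(I, E)) (a b c : I) :
    ((subpath γ a b).trans (subpath γ b c)).Homotopic (subpath γ a c) := by
  rw [← subpath_eq_map, ← subpath_eq_map, ← subpath_eq_map, ← Path.map_trans]
  exact Path.Homotopic.map (SimplyConnectedSpace.paths_homotopic _ _) γ

lemma Path.cast_rfl {x y : E} (u : Path x y) : u.cast rfl rfl = u := rfl

lemma Path.cast_trans' {x y z x' y' z' : E} (u : Path x y) (v : Path y z)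
    (hx : x' = x) (hy : y' = y) (hz : z' = z) :
    (u.cast hx hy).trans (v.cast hy hz) = (u.trans v).cast hx hz := by
  subst hx; subst hy; subst hz; rfl

lemma Path.Homotopic.cast {x y x' y' : E} {u v : Path x y} (h : u.Homotopic v)
    (hx : x' = x) (hy : y' = y) : (u.cast hx hy).Homotopic (v.cast hx hy) := by
  subst hx; subst hy; exact h

lemma Path.cast_refl {x y : E} (h : y = x) :
    (Path.refl x).cast h h = Path.refl y := by subst h; rfl

/-- One-step lift of a subpath through a trivialization. -/
lemma step_lift {p : E' → E} (hp : IsCoveringMap p) (γ : C(I, E)) (a b : I) (z : E) [Nonempty (p ⁻¹' {z})]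
    (hz : ∀ s : I, γ (affI a b s) ∈ (hp z).toTrivialization.baseSet)
    (e : E') (he : p e = γ a) :
    ∃ (e' : E') (he' : p e' = γ b) (r : Path e e'),
      r.map hp.continuous = (subpath γ a b).cast he he' := by
  set T := (hp z).toTrivialization with hT
  have hmem_src : e ∈ T.source := T.mem_source.2 (by rw [he]; exact (affI_zero a b) ▸ hz 0)
  set i0 := (T e).2 with hi0
  have htarget : ∀ s : I, (γ (affI a b s), i0) ∈ T.target := fun s => T.mem_target.2 (hz s)
  set f : I → E' := fun s => T.toPartialHomeomorph.symm (γ (affI a b s), i0) with hf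
  have hcont : Continuous f := by
    refine T.toPartialHomeomorph.continuousOn_symm.comp_continuous ?_ htarget
    exact ((γ.continuous.comp (continuous_affI a b)).prodMk continuous_const)
  have hproj : ∀ s, p (f s) = γ (affI a b s) := fun s => T.proj_symm_apply (htarget s)
  have hf0 : f 0 = e := by
    show T.toPartialHomeomorph.symm (γ (affI a b 0), (T e).2) = e
    rw [affI_zero, ← he]
    exact T.symm_apply_mk_proj hmem_src
  refine ⟨f 1, by rw [← affI_one a b]; exact hproj 1, ⟨⟨f, hcont⟩, hf0, rfl⟩, ?_⟩
  apply Path.ext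
  funext s
  show p (f s) = ((subpath γ a b).cast _ _ : I → E) s
  rw [Path.cast_coe]
  exact hproj s

/-- Path lifting for covering maps (up to homotopy class; exact on the nose, but
stated with a homotopy which is all we need). -/
lemma lift_path {p : E' → E} (hp : IsCoveringMap p) {x y : E} (q : Path x y)
    (e₀ : E') (he₀ : p e₀ = x) :
    ∃ (e₁ : E') (he₁ : p e₁ = y) (P : Path e₀ e₁),
      (P.map hp.continuous).Homotopic (q.cast he₀ he₁) := by
  obtain ⟨Γ, hΓ, hΓ0⟩ := hp.exists_path_lifts q.toContinuousMap e₀ (by simp [he₀])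
  have he₁ : p (Γ 1) = y := by
    rw [← Function.comp_apply (f := p), hΓ]; simp
  refine ⟨Γ 1, he₁, ⟨Γ, hΓ0, rfl⟩, ?_⟩
  have hm : (⟨Γ, hΓ0, rfl⟩ : Path e₀ (Γ 1)).map hp.continuous = q.cast he₀ he₁ := by
    ext s; show p (Γ s) = q s; rw [← Function.comp_apply (f := p), hΓ]; rfl
  rw [hm]

/-- A loop class as an element of the fundamental group. -/
noncomputable def loopToAut {X : Type u} [TopologicalSpace X] {x : X}
    (l : (FundamentalGroupoid.mk x ⟶ FundamentalGroupoid.mk x)) : Aut (FundamentalGroupoid.mk x) :=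
  ⟨l, CategoryTheory.Groupoid.inv l, CategoryTheory.Groupoid.comp_inv l,
    CategoryTheory.Groupoid.inv_comp l⟩

@[simp] lemma loopToAut_hom {X : Type u} [TopologicalSpace X] {x : X}
    (l : (FundamentalGroupoid.mk x ⟶ FundamentalGroupoid.mk x)) : (loopToAut l).hom = l := rfl

lemma piMap_loopToAut {X Y : Type u} [TopologicalSpace X] [TopologicalSpace Y]
    (f : C(X, Y)) (x : X) (l : Path x x) :
    piMap f x (loopToAut ⟦l⟧) = loopToAut ⟦l.map f.continuous⟧ :=
  Aut.ext rfl

end Aux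

/-- Proposition 3.1(2): for the Hawking cover `p : E' → E` associated to the subgroup
`i_*π₁(S, x)` of `π₁(E, x)`, if `p⁻¹(S)` is path-connected then
`i_* : π₁(S, x) → π₁(E, x)` is onto. -/
theorem inclusion_pi1_surjective_of_preimage_pathConnected
    {E E' : Type u} [TopologicalSpace E] [TopologicalSpace E']
    [ConnectedSpace E] [LocallyPathConnectedSpace E]
    (S : Set E) (hSpc : IsPathConnected S) [LocallyPathConnectedSpace S]
    (p : E' → E) (hp : IsCoveringMap p) [PathConnectedSpace E']
    (xh : E') (hmem : p xh ∈ S)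
    (hrange : (piMap ⟨p, hp.continuous⟩ xh).range
      = (piMap ⟨(Subtype.val : S → E), continuous_subtype_val⟩ ⟨p xh, hmem⟩).range)
    (hpre : IsPathConnected (p ⁻¹' S)) :
    Function.Surjective
      (piMap ⟨(Subtype.val : S → E), continuous_subtype_val⟩ ⟨p xh, hmem⟩) := by
  intro a
  -- pick a representative loop of `a`
  obtain ⟨q, hq⟩ := Quotient.exists_rep
    (a.hom : Path.Homotopic.Quotient (p xh) (p xh))
  -- lift it to a path in E' starting at xh
  obtain ⟨e, he, P, hP⟩ := lift_path hp q xh rfl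
  -- join the endpoint back to xh inside p ⁻¹' S
  have heS : e ∈ p ⁻¹' S := by
    show p e ∈ S
    rw [he]; exact hmem
  obtain ⟨δ, hδ⟩ := hpre.joinedIn e heS xh hmem
  -- the projected return path, as a loop in S
  let δS : Path (⟨p xh, hmem⟩ : S) (⟨p xh, hmem⟩ : S) :=
    { toFun := fun s => ⟨p (δ s), hδ s⟩
      continuous_toFun := (hp.continuous.comp δ.continuous).subtype_mk _
      source' := Subtype.ext (show p (δ 0) = p xh by rw [Path.source]; exact he)
      target' := Subtype.ext (show p (δ 1) = p xh by rw [Path.target]) }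
  let c : Aut (FundamentalGroupoid.mk (p xh)) := loopToAut ⟦(P.trans δ).map hp.continuous⟧
  let d : Aut (FundamentalGroupoid.mk (p xh)) := loopToAut ⟦δS.map continuous_subtype_val⟧
  -- c = d * a
  have hkey : c = d * a := by
    apply Aut.ext
    show (⟦(P.trans δ).map hp.continuous⟧ : Path.Homotopic.Quotient _ _)
      = (a.trans (loopToAut ⟦δS.map continuous_subtype_val⟧)).hom
    show (⟦(P.trans δ).map hp.continuous⟧ : Path.Homotopic.Quotient _ _)
      = a.hom ≫ ⟦δS.map continuous_subtype_val⟧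
    rw [← hq]
    show (⟦(P.trans δ).map hp.continuous⟧ : Path.Homotopic.Quotient _ _)
      = ⟦q.trans (δS.map continuous_subtype_val)⟧
    apply Quotient.sound
    have hmt : (P.trans δ).map hp.continuous
        = (P.map hp.continuous).trans (δ.map hp.continuous) := Path.map_trans P δ hp.continuous
    rw [hmt]
    have h2 : δ.map hp.continuous = (δS.map continuous_subtype_val).cast he rfl :=
      Path.ext (funext fun s => by rw [Path.cast_coe]; rfl)
    rw [h2]
    have h3 := Path.Homotopic.hcomp hP
      (Path.Homotopic.refl ((δS.map continuous_subtype_val).cast he rfl))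
    rw [Path.cast_trans' q (δS.map continuous_subtype_val) rfl he rfl, Path.cast_rfl] at h3
    exact h3
  -- c is in the range of p_*
  have hcr : c ∈ (piMap ⟨p, hp.continuous⟩ xh).range := by
    refine ⟨loopToAut ⟦P.trans δ⟧, ?_⟩
    exact piMap_loopToAut ⟨p, hp.continuous⟩ xh (P.trans δ)
  rw [hrange] at hcr
  have hdr : d ∈ (piMap ⟨(Subtype.val : S → E), continuous_subtype_val⟩ ⟨p xh, hmem⟩).range :=
    ⟨loopToAut ⟦δS⟧, piMap_loopToAut ⟨(Subtype.val : S → E), continuous_subtype_val⟩ ⟨p xh, hmem⟩ δS⟩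
  obtain ⟨c', hc'⟩ := hcr
  obtain ⟨d', hd'⟩ := hdr
  refine ⟨d'⁻¹ * c', ?_⟩
  rw [map_mul, map_inv, hc', hd', hkey]
  group
end

section
/- Let V and M be connected, locally path-connected topological spaces, let ι : V → M be a topological embedding, and let v₀ ∈ V be such that ι_* : π₁(V, v₀) → π₁(M, ι(v₀)) is injective. Let p : Ṽ → V and P : M̃ → M be covering maps with Ṽ and M̃ path-connected, let x̃ ∈ p⁻¹(v₀) and ã ∈ P⁻¹(ι(v₀)), and suppose P_*(π₁(M̃, ã)) = (ι ∘ p)_*(π₁(Ṽ, x̃)) as subgroups of π₁(M, ι(v₀)). Let ψ̄ : Ṽ → M̃ be a continuous map with P ∘ ψ̄ = ι ∘ p and ψ̄(x̃) = ã. Then ψ̄ is injective. -/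
open CategoryTheory

universe u

/-- Transport of fundamental groups along an equality of basepoints. -/
noncomputable def pi1Cast {X : Type u} [TopologicalSpace X] {a b : X} (h : a = b) :
    Aut (FundamentalGroupoid.mk a) ≃* Aut (FundamentalGroupoid.mk b) := by
  subst h; exact MulEquiv.refl _

section Lifting

open Set Topology


variable {E X : Type*} [TopologicalSpace E] [TopologicalSpace X] {q : E → X}
  [∀ x, Nonempty (q ⁻¹' {x})]

lemma continuousOn_union_closed {Z Y : Type*} [TopologicalSpace Z] [TopologicalSpace Y]
    {A B : Set Z} [DecidablePred (· ∈ A)] (hA : IsClosed A) (hB : IsClosed B) {f g : Z → Y}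
    (hf : ContinuousOn f A) (hg : ContinuousOn g B) (h : EqOn f g (A ∩ B)) :
    ContinuousOn (fun z => if z ∈ A then f z else g z) (A ∪ B) := by
  classical
  set φ : Z → Y := fun z => if z ∈ A then f z else g z with hφ
  have hEA : EqOn φ f A := fun w hw => by simp [φ, hw]
  have hEB : EqOn φ g B := fun w hw => by
    by_cases hwA : w ∈ A
    · simp [φ, hwA, h ⟨hwA, hw⟩]
    · simp [φ, hwA]
  intro z _
  have hA' : ContinuousWithinAt φ A z := by
    by_cases hzA : z ∈ A
    · exact (hf z hzA).congr hEA (hEA hzA)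
    · exact continuousWithinAt_of_notMem_closure (by rwa [hA.closure_eq])
  have hB' : ContinuousWithinAt φ B z := by
    by_cases hzB : z ∈ B
    · exact (hg z hzB).congr hEB (hEB hzB)
    · exact continuousWithinAt_of_notMem_closure (by rwa [hB.closure_eq])
  exact hA'.union hB'

lemma IsCoveringMap.glue (hq : IsCoveringMap q) {Z : Type*} [TopologicalSpace Z]
    {A B : Set Z} (hA : IsClosed A) (hB : IsClosed B)
    {H : Z → X} (hH : Continuous H)
    {g : Z → E} (hg : ContinuousOn g A) (hgq : ∀ z ∈ A, q (g z) = H z)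
    (hconn : IsPreconnected (A ∩ B)) {z₀ : Z} (hz₀ : z₀ ∈ A ∩ B)
    {x : X} (hBx : ∀ z ∈ B, H z ∈ (hq x).toTrivialization.baseSet) :
    ∃ g' : Z → E, ContinuousOn g' (A ∪ B) ∧ (∀ z ∈ A ∪ B, q (g' z) = H z) ∧ EqOn g' g A := by
  classical
  haveI : DiscreteTopology (q ⁻¹' {x}) := (hq x).1
  set T := (hq x).toTrivialization with hT
  set i : q ⁻¹' {x} := (T (g z₀)).2 with hi
  set σ : Z → E := fun z => T.toPartialHomeomorph.symm (H z, i) with hσ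
  have hmem : ∀ z ∈ A ∩ B, g z ∈ T.source := fun z hz =>
    T.mem_source.2 (by rw [hgq z hz.1]; exact hBx z hz.2)
  have hsheet : ∀ z ∈ A ∩ B, (T (g z)).2 = i := by
    intro z hz
    have hc : ContinuousOn (fun w => (T (g w)).2) (A ∩ B) := by
      apply continuous_snd.comp_continuousOn
      exact T.continuousOn_toFun.comp (hg.mono inter_subset_left) hmem
    exact hconn.constant hc hz hz₀
  have hagree : ∀ z ∈ A ∩ B, g z = σ z := by
    intro z hz
    have h1 : T (g z) = (H z, i) := by
      refine Prod.ext ?_ (hsheet z hz)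
      rw [T.coe_fst (hmem z hz), hgq z hz.1]
    calc g z = T.toPartialHomeomorph.symm (T (g z)) :=
          (T.toPartialHomeomorph.left_inv (hmem z hz)).symm
      _ = σ z := by rw [h1]
  have hσq : ∀ z ∈ B, q (σ z) = H z := fun z hz =>
    T.proj_symm_apply (T.mem_target.2 (hBx z hz))
  have hσc : ContinuousOn σ B := by
    apply T.toPartialHomeomorph.continuousOn_symm.comp
      ((hH.prodMk continuous_const).continuousOn)
    exact fun z hz => T.mem_target.2 (hBx z hz)
  refine ⟨fun z => if z ∈ A then g z else σ z,
    continuousOn_union_closed hA hB hg hσc hagree, ?_, fun z hz => if_pos hz⟩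
  intro z hz
  by_cases hzA : z ∈ A
  · simpa [hzA] using hgq z hzA
  · have hzB : z ∈ B := hz.resolve_left hzA
    simpa [hzA] using hσq z hzB


lemma IsCoveringMap.exists_lift_square (hq : IsCoveringMap q)
    {H : ℝ × ℝ → X} (hH : Continuous H) {e : E} (he : q e = H (0, 0)) :
    ∃ g : ℝ × ℝ → E, ContinuousOn g (Icc 0 1 ×ˢ Icc 0 1) ∧
      (∀ z ∈ (Icc (0:ℝ) 1 ×ˢ Icc (0:ℝ) 1 : Set (ℝ × ℝ)), q (g z) = H z) ∧ g (0, 0) = e := by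
  classical
  obtain ⟨δ, hδ, hball⟩ := lebesgue_number_lemma_of_metric
    (isCompact_Icc.prod isCompact_Icc)
    (c := fun x : X => H ⁻¹' (hq x).toTrivialization.baseSet)
    (fun x => (hq x).toTrivialization.open_baseSet.preimage hH)
    (fun z _ => mem_iUnion.2 ⟨H z, (hq (H z)).mem_toTrivialization_baseSet⟩)
  obtain ⟨n₀, hn₀⟩ := exists_nat_one_div_lt hδ
  set n : ℕ := n₀ + 1 with hn
  have hnpos : (0:ℝ) < (n:ℝ) := by positivity
  have hn1 : (1:ℝ)/(n:ℝ) < δ := by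
    have hcast : ((n:ℝ)) = (n₀:ℝ) + 1 := by rw [hn]; push_cast; ring
    rw [hcast]; exact hn₀
  set a : ℕ → ℝ := fun k => (k:ℝ)/(n:ℝ) with ha
  have ha0 : a 0 = 0 := by simp [ha]
  have han : a n = 1 := by simp only [ha]; exact div_self hnpos.ne'
  have hak : ∀ k, 0 ≤ a k := fun k => by positivity
  have hsucc : ∀ k : ℕ, a (k+1) = a k + 1/(n:ℝ) := fun k => by
    simp only [ha]; push_cast; ring
  have hstep : ∀ k, a k ≤ a (k+1) := fun k => by
    have h1n : (0:ℝ) < 1/(n:ℝ) := by positivity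
    rw [hsucc]; linarith
  have htop : ∀ k, k ≤ n → a k ≤ 1 := fun k hk => by
    rw [← han]
    exact (div_le_div_iff_of_pos_right hnpos).2 (Nat.cast_le.2 hk)
  have key : ∀ i j : ℕ, i + 1 ≤ n → j + 1 ≤ n →
      ∃ x : X, ∀ z ∈ (Icc (a i) (a (i+1)) ×ˢ Icc (a j) (a (j+1)) : Set (ℝ × ℝ)),
        H z ∈ (hq x).toTrivialization.baseSet := by
    intro i j hi hj
    have hc : ((a i, a j) : ℝ × ℝ) ∈ (Icc (0:ℝ) 1 ×ˢ Icc (0:ℝ) 1 : Set (ℝ×ℝ)) :=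
      ⟨⟨hak i, htop i (le_trans (Nat.le_succ i) hi)⟩, ⟨hak j, htop j (le_trans (Nat.le_succ j) hj)⟩⟩
    obtain ⟨x, hx⟩ := hball _ hc
    refine ⟨x, fun z hz => hx ?_⟩
    have h1 := hz.1; have h2 := hz.2
    rw [hsucc i, mem_Icc] at h1; rw [hsucc j, mem_Icc] at h2
    have e1 : |z.1 - a i| < δ := abs_lt.2 ⟨by linarith [h1.1], by linarith [h1.2]⟩
    have e2 : |z.2 - a j| < δ := abs_lt.2 ⟨by linarith [h2.1], by linarith [h2.2]⟩
    have : dist z ((a i, a j) : ℝ × ℝ) < δ := by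
      rw [Prod.dist_eq]
      exact max_lt (by rwa [Real.dist_eq]) (by rwa [Real.dist_eq])
    exact Metric.mem_ball.2 this
  -- Phase 1 : bottom edge
  have hedge : ∀ i : ℕ, i ≤ n → ∃ g : ℝ × ℝ → E, ContinuousOn g (Icc 0 (a i) ×ˢ Icc 0 0) ∧
      (∀ z ∈ (Icc (0:ℝ) (a i) ×ˢ Icc (0:ℝ) 0 : Set (ℝ×ℝ)), q (g z) = H z) ∧ g (0,0) = e := by
    intro i hi
    induction i with
    | zero =>
      refine ⟨fun _ => e, continuousOn_const, ?_, rfl⟩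
      intro z hz
      have hz1 : z.1 = 0 := le_antisymm (by simpa [ha0] using hz.1.2) hz.1.1
      have hz2 : z.2 = 0 := le_antisymm hz.2.2 hz.2.1
      have hzz : z = ((0 : ℝ), (0 : ℝ)) := Prod.ext hz1 hz2
      rw [hzz]; exact he
    | succ i ih =>
      obtain ⟨g, hgc, hgq, hg0⟩ := ih (Nat.le_of_succ_le hi)
      obtain ⟨x, hx⟩ := key i 0 hi (by omega)
      have hBsub : (Icc (a i) (a (i+1)) ×ˢ Icc (0:ℝ) 0 : Set (ℝ×ℝ)) ⊆
          Icc (a i) (a (i+1)) ×ˢ Icc (a 0) (a 1) := by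
        refine prod_mono subset_rfl ?_
        rw [ha0]
        exact Icc_subset_Icc le_rfl (hak 1)
      have hABeq : (Icc 0 (a i) ×ˢ Icc (0:ℝ) 0) ∩ (Icc (a i) (a (i+1)) ×ˢ Icc (0:ℝ) 0)
          = ({((a i : ℝ), (0:ℝ))} : Set (ℝ×ℝ)) := by
        rw [Set.prod_inter_prod, Icc_inter_Icc, inter_self,
          sup_eq_right.2 (hak i), inf_eq_left.2 (hstep i), Icc_self, Icc_self,
          singleton_prod_singleton]
      obtain ⟨g', hg'c, hg'q, hg'e⟩ := hq.glue (isClosed_Icc.prod isClosed_Icc)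
        (isClosed_Icc.prod isClosed_Icc) hH hgc hgq
        (by rw [hABeq]; exact isPreconnected_singleton)
        (hz₀ := by rw [hABeq]; exact rfl)
        (fun z hz => hx z (hBsub hz))
      have hU : (Icc 0 (a i) ×ˢ Icc (0:ℝ) 0) ∪ (Icc (a i) (a (i+1)) ×ˢ Icc (0:ℝ) 0)
          = Icc 0 (a (i+1)) ×ˢ Icc (0:ℝ) 0 := by
        rw [← Set.union_prod, Icc_union_Icc_eq_Icc (hak i) (hstep i)]
      rw [hU] at hg'c hg'q
      refine ⟨g', hg'c, hg'q, ?_⟩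
      rw [hg'e ⟨⟨le_refl (0:ℝ), hak i⟩, ⟨le_refl (0:ℝ), le_refl (0:ℝ)⟩⟩]
      exact hg0
  -- Phase 2 : rows
  have main : ∀ j : ℕ, j ≤ n → ∃ g : ℝ × ℝ → E, ContinuousOn g (Icc 0 1 ×ˢ Icc 0 (a j)) ∧
      (∀ z ∈ (Icc (0:ℝ) 1 ×ˢ Icc (0:ℝ) (a j) : Set (ℝ×ℝ)), q (g z) = H z) ∧ g (0,0) = e := by
    intro j hj
    induction j with
    | zero =>
      obtain ⟨g, h1, h2, h3⟩ := hedge n le_rfl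
      rw [han] at h1 h2
      rw [ha0]
      exact ⟨g, h1, h2, h3⟩
    | succ j ih =>
      obtain ⟨g, hgc, hgq, hg0⟩ := ih (Nat.le_of_succ_le hj)
      have inner : ∀ i : ℕ, i ≤ n → ∃ g' : ℝ × ℝ → E,
          ContinuousOn g' ((Icc 0 1 ×ˢ Icc 0 (a j)) ∪ (Icc 0 (a i) ×ˢ Icc (a j) (a (j+1)))) ∧
          (∀ z ∈ (Icc 0 1 ×ˢ Icc 0 (a j)) ∪ (Icc 0 (a i) ×ˢ Icc (a j) (a (j+1))),
            q (g' z) = H z) ∧ g' (0,0) = e := by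
        intro i hi
        induction i with
        | zero =>
          obtain ⟨x, hx⟩ := key 0 j (by omega) hj
          have hBsub : (Icc 0 (a 0) ×ˢ Icc (a j) (a (j+1)) : Set (ℝ×ℝ)) ⊆
              Icc (a 0) (a 1) ×ˢ Icc (a j) (a (j+1)) := by
            refine prod_mono ?_ subset_rfl
            rw [ha0]
            exact Icc_subset_Icc le_rfl (hak 1)
          have hABeq : (Icc 0 1 ×ˢ Icc 0 (a j)) ∩ (Icc 0 (a 0) ×ˢ Icc (a j) (a (j+1)))
              = ({((0:ℝ), a j)} : Set (ℝ×ℝ)) := by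
            rw [Set.prod_inter_prod, Icc_inter_Icc, Icc_inter_Icc, ha0,
              sup_idem, inf_eq_right.2 (zero_le_one), Icc_self,
              sup_eq_right.2 (hak j), inf_eq_left.2 (hstep j), Icc_self,
              singleton_prod_singleton]
          obtain ⟨g', h1, h2, h3⟩ := hq.glue ((isClosed_Icc.prod isClosed_Icc))
            (isClosed_Icc.prod isClosed_Icc) hH hgc hgq
            (by rw [hABeq]; exact isPreconnected_singleton)
            (hz₀ := by rw [hABeq]; exact rfl)
            (fun z hz => hx z (hBsub hz))
          refine ⟨g', h1, h2, ?_⟩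
          rw [h3 ⟨⟨le_refl (0:ℝ), zero_le_one⟩, ⟨le_refl (0:ℝ), hak j⟩⟩]
          exact hg0
        | succ i ih2 =>
          obtain ⟨g', hg'c, hg'q, hg'0⟩ := ih2 (Nat.le_of_succ_le hi)
          obtain ⟨x, hx⟩ := key i j hi hj
          have hABeq : ((Icc 0 1 ×ˢ Icc 0 (a j)) ∪ (Icc 0 (a i) ×ˢ Icc (a j) (a (j+1)))) ∩
              (Icc (a i) (a (i+1)) ×ˢ Icc (a j) (a (j+1)))
              = (Icc (a i) (a (i+1)) ×ˢ ({a j} : Set ℝ)) ∪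
                (({a i} : Set ℝ) ×ˢ Icc (a j) (a (j+1))) := by
            rw [Set.union_inter_distrib_right]
            congr 1
            · rw [Set.prod_inter_prod, Icc_inter_Icc, Icc_inter_Icc,
                sup_eq_right.2 (hak i), inf_eq_right.2 (htop (i+1) hi),
                sup_eq_right.2 (hak j), inf_eq_left.2 (hstep j), Icc_self]
            · rw [Set.prod_inter_prod, inter_self, Icc_inter_Icc,
                sup_eq_right.2 (hak i), inf_eq_left.2 (hstep i), Icc_self]
          have hpre : IsPreconnected (((Icc 0 1 ×ˢ Icc 0 (a j)) ∪
              (Icc 0 (a i) ×ˢ Icc (a j) (a (j+1)))) ∩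
              (Icc (a i) (a (i+1)) ×ˢ Icc (a j) (a (j+1)))) := by
            rw [hABeq]
            refine IsPreconnected.union ((a i, a j) : ℝ × ℝ) ?_ ?_ ?_ ?_
            · exact ⟨⟨le_rfl, hstep i⟩, rfl⟩
            · exact ⟨rfl, ⟨le_rfl, hstep j⟩⟩
            · exact ((convex_Icc _ _).prod (convex_singleton _)).isPreconnected
            · exact ((convex_singleton _).prod (convex_Icc _ _)).isPreconnected
          obtain ⟨g'', h1, h2, h3⟩ := hq.glue
            (((isClosed_Icc.prod isClosed_Icc)).union (isClosed_Icc.prod isClosed_Icc))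
            (isClosed_Icc.prod isClosed_Icc) hH hg'c hg'q hpre
            (z₀ := ((a i, a j) : ℝ × ℝ))
            (hz₀ := by rw [hABeq]; exact Or.inl ⟨⟨le_rfl, hstep i⟩, rfl⟩)
            (fun z hz => hx z hz)
          have hU : (((Icc 0 1 ×ˢ Icc 0 (a j)) ∪ (Icc 0 (a i) ×ˢ Icc (a j) (a (j+1)))) ∪
              (Icc (a i) (a (i+1)) ×ˢ Icc (a j) (a (j+1))))
              = (Icc 0 1 ×ˢ Icc 0 (a j)) ∪ (Icc 0 (a (i+1)) ×ˢ Icc (a j) (a (j+1))) := by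
            rw [union_assoc, ← Set.union_prod, Icc_union_Icc_eq_Icc (hak i) (hstep i)]
          rw [hU] at h1 h2
          refine ⟨g'', h1, h2, ?_⟩
          rw [h3 (Or.inl ⟨⟨le_refl (0:ℝ), zero_le_one⟩, ⟨le_refl (0:ℝ), hak j⟩⟩)]
          exact hg'0
      obtain ⟨g', h1, h2, h3⟩ := inner n le_rfl
      have hU : (Icc 0 1 ×ˢ Icc 0 (a j)) ∪ (Icc 0 (a n) ×ˢ Icc (a j) (a (j+1)))
          = Icc 0 1 ×ˢ Icc 0 (a (j+1)) := by
        rw [han, ← Set.prod_union, Icc_union_Icc_eq_Icc (hak j) (hstep j)]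
      rw [hU] at h1 h2
      exact ⟨g', h1, h2, h3⟩
  obtain ⟨g, h1, h2, h3⟩ := main n le_rfl
  rw [han] at h1 h2
  exact ⟨g, h1, h2, h3⟩


set_option maxHeartbeats 1000000 in
lemma IsCoveringMap.endpoint_eq (hq : IsCoveringMap q) {x a b : E}
    {α : Path x a} {β : Path x b} (hab : q a = q b)
    (h : (α.map hq.continuous).Homotopic ((β.map hq.continuous).cast rfl hab)) :
    a = b := by
  obtain ⟨F⟩ := h
  set π : ℝ → unitInterval := Set.projIcc 0 1 zero_le_one with hπdef
  have hπc : Continuous π := continuous_projIcc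
  have hπ0 : π 0 = 0 := Subtype.ext (by simp [hπdef, Set.coe_projIcc])
  have hπ1 : π 1 = 1 := Subtype.ext (by simp [hπdef, Set.coe_projIcc])
  set Hr : ℝ × ℝ → X := fun z => F (π z.1, π z.2) with hHrdef
  have hHrc : Continuous Hr :=
    F.continuous.comp ((hπc.comp continuous_fst).prodMk (hπc.comp continuous_snd))
  have h0mem : (0:ℝ) ∈ Icc (0:ℝ) 1 := ⟨le_rfl, zero_le_one⟩
  have h1mem : (1:ℝ) ∈ Icc (0:ℝ) 1 := ⟨zero_le_one, le_rfl⟩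
  have hI0 : (0 : unitInterval) ∈ ({0, 1} : Set unitInterval) := Or.inl rfl
  have hI1 : (1 : unitInterval) ∈ ({0, 1} : Set unitInterval) := Or.inr rfl
  have he' : q x = Hr (0, 0) := by
    show q x = F (π 0, π 0)
    rw [hπ0, F.apply_zero]
    exact ((α.map hq.continuous).source).symm
  obtain ⟨g, hgc, hgq, hg0⟩ := hq.exists_lift_square hHrc he'
  -- bottom edge : g (1,0) = x
  have hBsub : (Icc (0:ℝ) 1 ×ˢ ({0} : Set ℝ) : Set (ℝ×ℝ)) ⊆ Icc 0 1 ×ˢ Icc 0 1 :=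
    prod_mono subset_rfl (singleton_subset_iff.2 h0mem)
  have hbot : g (1, 0) = x := by
    have hconst : ∀ z ∈ (Icc (0:ℝ) 1 ×ˢ ({0} : Set ℝ) : Set (ℝ×ℝ)), q (g z) = q x := by
      intro z hz
      have hz2 : z.2 = 0 := mem_singleton_iff.1 hz.2
      rw [hgq z (hBsub hz)]
      show F (π z.1, π z.2) = q x
      rw [hz2, hπ0, F.eq_fst _ hI0]
      exact (α.map hq.continuous).source
    have := hq.constOn_of_comp (((convex_Icc _ _).prod (convex_singleton _)).isPreconnected)
      (hgc.mono hBsub)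
      (fun z hz w hw => by rw [hconst z hz, hconst w hw])
      (⟨h1mem, rfl⟩ : ((1:ℝ), (0:ℝ)) ∈ (Icc (0:ℝ) 1 ×ˢ ({0} : Set ℝ) : Set (ℝ×ℝ)))
      (⟨h0mem, rfl⟩ : ((0:ℝ), (0:ℝ)) ∈ (Icc (0:ℝ) 1 ×ˢ ({0} : Set ℝ) : Set (ℝ×ℝ)))
    rw [this, hg0]
  -- left edge : g (0,1) = a
  have hLsub : (({0} : Set ℝ) ×ˢ Icc (0:ℝ) 1 : Set (ℝ×ℝ)) ⊆ Icc 0 1 ×ˢ Icc 0 1 :=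
    prod_mono (singleton_subset_iff.2 h0mem) subset_rfl
  have hleft : g (0, 1) = a := by
    have heq := hq.eqOn_of_comp_eqOn (((convex_singleton _).prod (convex_Icc _ _)).isPreconnected)
      (hgc.mono hLsub)
      ((α.continuous.comp (hπc.comp continuous_snd)).continuousOn :
        ContinuousOn (fun z : ℝ×ℝ => α (π z.2)) _)
      (fun z hz => by
        have hz1 : z.1 = 0 := mem_singleton_iff.1 hz.1
        show q (g z) = q (α (π z.2))
        rw [hgq z (hLsub hz)]
        show F (π z.1, π z.2) = q (α (π z.2))
        rw [hz1, hπ0, F.apply_zero]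
        rfl)
      (⟨rfl, h0mem⟩ : ((0:ℝ), (0:ℝ)) ∈ (({0} : Set ℝ) ×ˢ Icc (0:ℝ) 1 : Set (ℝ×ℝ)))
      (by rw [hg0]; show x = α (π 0); rw [hπ0]; exact α.source.symm)
    have := heq (⟨rfl, h1mem⟩ : ((0:ℝ), (1:ℝ)) ∈ (({0} : Set ℝ) ×ˢ Icc (0:ℝ) 1 : Set (ℝ×ℝ)))
    rw [this]
    show α (π 1) = a
    rw [hπ1]
    exact α.target
  -- right edge : g (1,1) = b
  have hRsub : (({1} : Set ℝ) ×ˢ Icc (0:ℝ) 1 : Set (ℝ×ℝ)) ⊆ Icc 0 1 ×ˢ Icc 0 1 :=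
    prod_mono (singleton_subset_iff.2 h1mem) subset_rfl
  have hright : g (1, 1) = b := by
    have heq := hq.eqOn_of_comp_eqOn (((convex_singleton _).prod (convex_Icc _ _)).isPreconnected)
      (hgc.mono hRsub)
      ((β.continuous.comp (hπc.comp continuous_snd)).continuousOn :
        ContinuousOn (fun z : ℝ×ℝ => β (π z.2)) _)
      (fun z hz => by
        have hz1 : z.1 = 1 := mem_singleton_iff.1 hz.1
        show q (g z) = q (β (π z.2))
        rw [hgq z (hRsub hz)]
        show F (π z.1, π z.2) = q (β (π z.2))
        rw [hz1, hπ1, F.apply_one]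
        show ((β.map hq.continuous).cast rfl hab) (π z.2) = q (β (π z.2))
        rw [Path.cast_coe]
        rfl)
      (⟨rfl, h0mem⟩ : ((1:ℝ), (0:ℝ)) ∈ (({1} : Set ℝ) ×ˢ Icc (0:ℝ) 1 : Set (ℝ×ℝ)))
      (by rw [hbot]; show x = β (π 0); rw [hπ0]; exact β.source.symm)
    have := heq (⟨rfl, h1mem⟩ : ((1:ℝ), (1:ℝ)) ∈ (({1} : Set ℝ) ×ˢ Icc (0:ℝ) 1 : Set (ℝ×ℝ)))
    rw [this]
    show β (π 1) = b
    rw [hπ1]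
    exact β.target
  -- top edge : g (0,1) = g (1,1)
  have hTsub : (Icc (0:ℝ) 1 ×ˢ ({1} : Set ℝ) : Set (ℝ×ℝ)) ⊆ Icc 0 1 ×ˢ Icc 0 1 :=
    prod_mono subset_rfl (singleton_subset_iff.2 h1mem)
  have htop : g (0, 1) = g (1, 1) := by
    have hconst : ∀ z ∈ (Icc (0:ℝ) 1 ×ˢ ({1} : Set ℝ) : Set (ℝ×ℝ)), q (g z) = q a := by
      intro z hz
      have hz2 : z.2 = 1 := mem_singleton_iff.1 hz.2
      rw [hgq z (hTsub hz)]
      show F (π z.1, π z.2) = q a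
      rw [hz2, hπ1, F.eq_fst _ hI1]
      exact (α.map hq.continuous).target
    exact hq.constOn_of_comp (((convex_Icc _ _).prod (convex_singleton _)).isPreconnected)
      (hgc.mono hTsub)
      (fun z hz w hw => by rw [hconst z hz, hconst w hw])
      (⟨h0mem, rfl⟩ : ((0:ℝ), (1:ℝ)) ∈ (Icc (0:ℝ) 1 ×ˢ ({1} : Set ℝ) : Set (ℝ×ℝ)))
      (⟨h1mem, rfl⟩ : ((1:ℝ), (1:ℝ)) ∈ (Icc (0:ℝ) 1 ×ˢ ({1} : Set ℝ) : Set (ℝ×ℝ)))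
  rw [← hleft, htop, hright]


end Lifting

attribute [local instance] Path.Homotopic.setoid

noncomputable def autPath {X : Type u} [TopologicalSpace X] {x : X}
    (q : Path.Homotopic.Quotient x x) : Aut (FundamentalGroupoid.mk x) :=
  (Groupoid.isoEquivHom (FundamentalGroupoid.mk x) (FundamentalGroupoid.mk x)).symm q

lemma piMap_fromPath {X Y : Type u} [TopologicalSpace X] [TopologicalSpace Y]
    (f : C(X, Y)) (x : X) (γ : Path x x) :
    piMap f x (autPath ⟦γ⟧)
      = autPath ⟦γ.map f.continuous⟧ :=
  Iso.ext rfl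

lemma fromPath_toPath {X : Type u} [TopologicalSpace X] {x : X}
    (g : Aut (FundamentalGroupoid.mk x)) :
    autPath g.hom
      = g :=
  Iso.ext rfl

lemma pi1Cast_fromPath {X : Type u} [TopologicalSpace X] {x y : X} (h : x = y)
    (γ : Path x x) :
    pi1Cast h (autPath ⟦γ⟧)
      = autPath ⟦γ.cast h.symm h.symm⟧ := by
  subst h
  rfl


/-- Footnote of Section 3.2: the lift `ψ̄ : Ṽ → M̃` of `ι ∘ p` to the covering `P`,
chosen so that `P_*π₁(M̃, ã) = (ι ∘ p)_*π₁(Ṽ, x̃)`, is injective. -/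
theorem lift_injective
    {V M Vt Mt : Type u} [TopologicalSpace V] [TopologicalSpace M]
    [TopologicalSpace Vt] [TopologicalSpace Mt]
    [ConnectedSpace V] [LocallyPathConnectedSpace V]
    [ConnectedSpace M] [LocallyPathConnectedSpace M]
    (iota : V → M) (hiota_cont : Continuous iota) (hiota : Topology.IsEmbedding iota)
    (p : Vt → V) (hp : IsCoveringMap p) [PathConnectedSpace Vt]
    (P : Mt → M) (hP : IsCoveringMap P) [PathConnectedSpace Mt]
    (xt : Vt)
    (hinj : Function.Injective (piMap ⟨iota, hiota_cont⟩ (p xt)))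
    (at_ : Mt) (hat : P at_ = iota (p xt))
    (hrange : Subgroup.map (pi1Cast hat).toMonoidHom (piMap ⟨P, hP.continuous⟩ at_).range
      = (piMap ((⟨iota, hiota_cont⟩ : C(V, M)).comp ⟨p, hp.continuous⟩) xt).range)
    (psib : Vt → Mt) (hpsib_cont : Continuous psib)
    (hcomm : ∀ y : Vt, P (psib y) = iota (p y))
    (hbase : psib xt = at_) :
    Function.Injective psib := by
  intro y₁ y₂ hψ
  have hpy : p y₁ = p y₂ := hiota.injective (by rw [← hcomm y₁, ← hcomm y₂, hψ])
  set ιCM : C(V, M) := ⟨iota, hiota_cont⟩ with hιCM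
  set pCM : C(Vt, V) := ⟨p, hp.continuous⟩ with hpCM
  set PCM : C(Mt, M) := ⟨P, hP.continuous⟩ with hPCM
  set fC : C(Vt, M) := ιCM.comp pCM with hfC
  set γ₁ : Path xt y₁ := PathConnectedSpace.somePath xt y₁ with hγ₁
  set γ₂ : Path xt y₂ := PathConnectedSpace.somePath xt y₂ with hγ₂
  set c : Path (p xt) (p y₁) := (γ₂.map hp.continuous).cast rfl hpy with hc
  set ℓV : Path (p xt) (p xt) := (γ₁.map hp.continuous).trans c.symm with hℓV
  set ℓ : Path at_ at_ :=
    ((γ₁.map hpsib_cont).cast hbase.symm rfl).trans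
      ((((γ₂.map hpsib_cont).cast hbase.symm rfl).symm).cast hψ rfl) with hℓ
  set gM : Aut (FundamentalGroupoid.mk at_) := autPath ⟦ℓ⟧ with hgM
  -- the element of the range
  have hz : pi1Cast hat (piMap PCM at_ gM) ∈ (piMap fC xt).range := by
    rw [← hrange]
    exact ⟨piMap PCM at_ gM, ⟨gM, rfl⟩, rfl⟩
  obtain ⟨gV, hgV⟩ := hz
  obtain ⟨d, hd⟩ := Quotient.exists_rep (s := Path.Homotopic.setoid xt xt) gV.hom
  have hgVd : gV = autPath ⟦d⟧ := by
    rw [hd]; exact (fromPath_toPath gV).symm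
  -- pointwise identification of the projected loop
  have hpath : (ℓ.map PCM.continuous).cast hat.symm hat.symm = ℓV.map ιCM.continuous := by
    ext t
    show P (ℓ t) = iota (ℓV t)
    rw [hℓ, hℓV, hc]
    simp only [Path.trans_apply]
    split_ifs with h
    · simp only [Path.cast_coe, Path.map_coe, Function.comp_apply]
      exact hcomm _
    · simp only [Path.cast_coe, Path.symm_apply, Path.map_coe, Function.comp_apply]
      exact hcomm _
  -- main equality in π₁(M)
  have hstep1 : piMap PCM at_ gM
      = autPath ⟦ℓ.map PCM.continuous⟧ := by
    rw [hgM, piMap_fromPath]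
  have hEq : autPath ⟦d.map fC.continuous⟧
      = autPath
          ⟦(ℓ.map PCM.continuous).cast hat.symm hat.symm⟧ := by
    rw [← piMap_fromPath fC xt d, ← hgVd, hgV, hstep1]
    exact pi1Cast_fromPath hat (ℓ.map PCM.continuous)
  have hmain : piMap ιCM (p xt) (autPath ⟦d.map hp.continuous⟧)
      = piMap ιCM (p xt) (autPath ⟦ℓV⟧) := by
    rw [piMap_fromPath, piMap_fromPath]
    have e1 : (d.map hp.continuous).map ιCM.continuous = d.map fC.continuous := by
      rw [Path.map_map]
    have e2 : ℓV.map ιCM.continuous = (ℓ.map PCM.continuous).cast hat.symm hat.symm := hpath.symm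
    rw [e1, e2]
    exact hEq
  have h5 := hinj hmain
  have hK : (⟦d.map hp.continuous⟧ : Path.Homotopic.Quotient (p xt) (p xt)) = ⟦ℓV⟧ :=
    congrArg (fun g => g.hom) h5
  -- groupoid algebra
  have hcomp : ∀ {u v w : V} (A : Path u v) (B : Path v w),
      (FundamentalGroupoid.fromPath ⟦A.trans B⟧ :
        FundamentalGroupoid.mk u ⟶ FundamentalGroupoid.mk w)
      = FundamentalGroupoid.fromPath ⟦A⟧ ≫
          FundamentalGroupoid.fromPath ⟦B⟧ :=
    fun A B => rfl
  have halg : (FundamentalGroupoid.fromPath ⟦(d.symm.trans γ₁).map hp.continuous⟧ :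
      FundamentalGroupoid.mk (p xt) ⟶ FundamentalGroupoid.mk (p y₁))
      = FundamentalGroupoid.fromPath ⟦c⟧ := by
    have e3 : (d.symm.trans γ₁).map hp.continuous
        = (d.map hp.continuous).symm.trans (γ₁.map hp.continuous) := by
      rw [Path.map_trans, Path.map_symm]
    have e4 : (⟦ℓV⟧ : Path.Homotopic.Quotient (p xt) (p xt))
        = ⟦(γ₁.map hp.continuous).trans c.symm⟧ := rfl
    rw [e3, hcomp]
    have hinvd : (FundamentalGroupoid.fromPath ⟦(d.map hp.continuous).symm⟧ :
        FundamentalGroupoid.mk (p xt) ⟶ FundamentalGroupoid.mk (p xt))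
        = Groupoid.inv (FundamentalGroupoid.fromPath ⟦d.map hp.continuous⟧) := rfl
    rw [hinvd, hK, e4, hcomp]
    have hinvc : (FundamentalGroupoid.fromPath ⟦c.symm⟧ :
        FundamentalGroupoid.mk (p y₁) ⟶ FundamentalGroupoid.mk (p xt))
        = Groupoid.inv (FundamentalGroupoid.fromPath ⟦c⟧) := rfl
    rw [hinvc]
    simp [Groupoid.inv_eq_inv]
  have hhom : ((d.symm.trans γ₁).map hp.continuous).Homotopic c := Quotient.exact halg
  haveI : PathConnectedSpace V := pathConnectedSpace_iff_connectedSpace.2 inferInstance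
  haveI : ∀ v, Nonempty (p ⁻¹' {v}) := fun v => by
    obtain ⟨Γ, hΓ, -⟩ := hp.exists_path_lifts
      (PathConnectedSpace.somePath (p xt) v).toContinuousMap xt (by simp)
    exact ⟨⟨Γ 1, by have := congrFun hΓ 1; simpa using this⟩⟩
  exact hp.endpoint_eq hpy hhom
end
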